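/- Consider the step-down test with Benjamini–Hochberg critical values b_i = iα/m (or the modified data-dependent values a_i = b_{m·F̂_m(p_{i:m})}). Under the basic independence assumptions, FDR ≤ (m_0/m)·α. -/

import Mathlib

open MeasureTheory ProbabilityTheory Finset
open scoped Classical
noncomputable section

/-- `#{i : p i ≤ t}`, i.e. `m·F̂_m(t)`. -/
def countLE {m : ℕ} (p : Fin m → ℝ) (t : ℝ) : ℕ :=
  (Finset.univ.filter (fun i => p i ≤ t)).card

/-- The `i`-th order statistic `p_{i:m}` (for `1 ≤ i ≤ m`), characterized by
`p_{i:m} ≤ t ↔ i ≤ #{k : p k ≤ t}`. -/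
def orderStat {m : ℕ} (p : Fin m → ℝ) (i : ℕ) : ℝ :=
  sInf {t | i ≤ countLE p t}

/-- Step-up rejection number `R = max {j : p_{j:m} ≤ α_j}` (`max ∅ = 0`). -/
def suR {m : ℕ} (α : ℕ → ℝ) (p : Fin m → ℝ) : ℕ :=
  WithBot.unbotD 0 (((Finset.range (m+1)).filter (fun j => 1 ≤ j ∧ orderStat p j ≤ α j)).max)

/-- Step-down rejection number `R = max {j : p_{i:m} ≤ α_i for all i ≤ j}`. -/
def sdR {m : ℕ} (α : ℕ → ℝ) (p : Fin m → ℝ) : ℕ :=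
  WithBot.unbotD 0 (((Finset.range (m+1)).filter
    (fun j => ∀ i ∈ Finset.Icc 1 j, orderStat p i ≤ α i)).max)

/-- FDR `= E[V / max(R,1)]` for rejection number `R` and rejection rule `rej`. -/
def FDR {Ω : Type*} [MeasurableSpace Ω] (μ : Measure Ω) {m : ℕ}
    (p : Ω → Fin m → ℝ) (I0 : Finset (Fin m))
    (R : (Fin m → ℝ) → ℕ) (rej : (Fin m → ℝ) → Fin m → Prop) : ℝ :=
  ∫ ω, ((I0.filter (fun i => rej (p ω) i)).card : ℝ) / (max (R (p ω)) 1 : ℕ) ∂μ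

/-- FDR of the step-up test with critical values `α`. -/
def suFDR {Ω : Type*} [MeasurableSpace Ω] (μ : Measure Ω) {m : ℕ}
    (α : ℕ → ℝ) (p : Ω → Fin m → ℝ) (I0 : Finset (Fin m)) : ℝ :=
  FDR μ p I0 (suR α) (fun q i => q i ≤ α (suR α q))

/-- FDR of the step-down test with critical values `α`
(rejecting the hypotheses belonging to `p_{i:m}`, `i ≤ R`). -/
def sdFDR {Ω : Type*} [MeasurableSpace Ω] (μ : Measure Ω) {m : ℕ}
    (α : ℕ → ℝ) (p : Ω → Fin m → ℝ) (I0 : Finset (Fin m)) : ℝ :=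
  FDR μ p I0 (sdR α) (fun q i => 1 ≤ sdR α q ∧ q i ≤ orderStat q (sdR α q))

/-- Benjamini–Hochberg critical values `b_j = jα/m`. -/
def bh (m : ℕ) (α : ℝ) (j : ℕ) : ℝ := j * α / m

/-- The uniform distribution on `[0,1]`. -/
def unif01 : Measure ℝ := volume.restrict (Set.Icc 0 1)

/-- Step-down rejection number with the data-dependent critical values
`a_i = b_{m·F̂_m(p_{i:m})}`. -/
def sdRdata {m : ℕ} (b : ℕ → ℝ) (p : Fin m → ℝ) : ℕ :=
  WithBot.unbotD 0 (((Finset.range (m+1)).filter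
    (fun j => ∀ i ∈ Finset.Icc 1 j,
      orderStat p i ≤ b (countLE p (orderStat p i)))).max)

/-- FDR of the step-down test with data-dependent critical values. -/
def sdFDRdata {Ω : Type*} [MeasurableSpace Ω] (μ : Measure Ω) {m : ℕ}
    (b : ℕ → ℝ) (p : Ω → Fin m → ℝ) (I0 : Finset (Fin m)) : ℝ :=
  FDR μ p I0 (sdRdata b) (fun q i => 1 ≤ sdRdata b q ∧ q i ≤ orderStat q (sdRdata b q))

namespace BH

variable {m : ℕ}

lemma countLE_mono (q : Fin m → ℝ) {s t : ℝ} (h : s ≤ t) : countLE q s ≤ countLE q t := by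
  apply Finset.card_le_card
  intro k hk
  rw [Finset.mem_filter] at hk ⊢
  exact ⟨hk.1, hk.2.trans h⟩

lemma countLE_le (q : Fin m → ℝ) (t : ℝ) : countLE q t ≤ m := by
  have := Finset.card_filter_le (Finset.univ : Finset (Fin m)) (fun k => q k ≤ t)
  simpa [countLE] using this

lemma countLE_anti (q q' : Fin m → ℝ) (h : ∀ k, q k ≤ q' k) (t : ℝ) :
    countLE q' t ≤ countLE q t := by
  apply Finset.card_le_card
  intro k hk
  rw [Finset.mem_filter] at hk ⊢
  exact ⟨hk.1, (h k).trans hk.2⟩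

lemma exists_le_of_countLE_pos {q : Fin m → ℝ} {t : ℝ} (h : 0 < countLE q t) : ∃ k, q k ≤ t := by
  obtain ⟨k, hk⟩ := Finset.card_pos.1 h
  exact ⟨k, (Finset.mem_filter.1 hk).2⟩

lemma orderStat_le_iff {q : Fin m → ℝ} {i : ℕ} (h1 : 1 ≤ i) (h2 : i ≤ m) (t : ℝ) :
    orderStat q i ≤ t ↔ i ≤ countLE q t := by
  have hm0 : 0 < m := lt_of_lt_of_le h1 h2
  have hne : (Finset.univ : Finset (Fin m)).Nonempty := ⟨⟨0, hm0⟩, Finset.mem_univ _⟩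
  have himg : (Finset.univ.image q).Nonempty := hne.image q
  rw [orderStat]
  set S := {s : ℝ | i ≤ countLE q s} with hSdef
  have hbdd : BddBelow S := by
    refine ⟨(Finset.univ.image q).min' himg, fun s hs => ?_⟩
    have h0 : 0 < countLE q s := lt_of_lt_of_le h1 hs
    obtain ⟨k, hk⟩ := exists_le_of_countLE_pos h0
    exact le_trans (Finset.min'_le _ _ (Finset.mem_image_of_mem q (Finset.mem_univ k))) hk
  have hSne : S.Nonempty := by
    refine ⟨(Finset.univ.image q).max' himg, ?_⟩
    have hfil : Finset.univ.filter (fun k => q k ≤ (Finset.univ.image q).max' himg)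
        = Finset.univ := by
      apply Finset.filter_true_of_mem
      intro k _
      exact Finset.le_max' _ _ (Finset.mem_image_of_mem q (Finset.mem_univ k))
    have : countLE q ((Finset.univ.image q).max' himg) = m := by
      simp [countLE, hfil]
    simp only [hSdef, Set.mem_setOf_eq, this]
    exact h2
  have hmem : i ≤ countLE q (sInf S) := by
    by_contra hcon
    push_neg at hcon
    have hBne : (Finset.univ.filter (fun k => sInf S < q k)).Nonempty := by
      rw [Finset.filter_nonempty_iff]
      by_contra hb; push_neg at hb
      have hfil : Finset.univ.filter (fun k => q k ≤ sInf S) = Finset.univ :=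
        Finset.filter_true_of_mem (fun k _ => hb k (Finset.mem_univ k))
      have : countLE q (sInf S) = m := by simp [countLE, hfil]
      omega
    set B := (Finset.univ.filter (fun k => sInf S < q k)).image q with hB
    have hBne' : B.Nonempty := hBne.image q
    have ht1 : sInf S < B.min' hBne' := by
      rcases Finset.mem_image.1 (B.min'_mem hBne') with ⟨k, hk, hkeq⟩
      rw [← hkeq]
      exact (Finset.mem_filter.1 hk).2
    have hlb : ∀ s ∈ S, B.min' hBne' ≤ s := by
      intro s hs
      by_contra hcon2; push_neg at hcon2
      have hsub : countLE q s ≤ countLE q (sInf S) := by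
        apply Finset.card_le_card
        intro k hk
        rw [Finset.mem_filter] at hk ⊢
        refine ⟨hk.1, ?_⟩
        by_contra hq; push_neg at hq
        have hkB : q k ∈ B := Finset.mem_image_of_mem q
          (Finset.mem_filter.2 ⟨Finset.mem_univ _, hq⟩)
        exact absurd (le_trans (Finset.min'_le _ _ hkB) hk.2) (not_le.2 hcon2)
      have his : i ≤ countLE q s := hs
      omega
    exact absurd (le_csInf hSne hlb) (not_le.2 ht1)
  constructor
  · intro h
    exact le_trans hmem (countLE_mono q h)
  · intro h
    exact csInf_le hbdd h

lemma le_countLE_orderStat {q : Fin m → ℝ} {i : ℕ} (h1 : 1 ≤ i) (h2 : i ≤ m) :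
    i ≤ countLE q (orderStat q i) := (orderStat_le_iff h1 h2 _).1 le_rfl

lemma orderStat_mono {q : Fin m → ℝ} {i j : ℕ} (h1 : 1 ≤ i) (hij : i ≤ j) (h2 : j ≤ m) :
    orderStat q i ≤ orderStat q j :=
  (orderStat_le_iff h1 (hij.trans h2) _).2
    (le_trans hij (le_countLE_orderStat (h1.trans hij) h2))

lemma orderStat_anti {q q' : Fin m → ℝ} (h : ∀ k, q k ≤ q' k) {i : ℕ} (h1 : 1 ≤ i) (h2 : i ≤ m) :
    orderStat q i ≤ orderStat q' i :=
  (orderStat_le_iff h1 h2 _).2 (le_trans (le_countLE_orderStat h1 h2) (countLE_anti q q' h _))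

lemma exists_orderStat_eq {q : Fin m → ℝ} {i : ℕ} (h1 : 1 ≤ i) (h2 : i ≤ m) :
    ∃ k, q k = orderStat q i := by
  by_contra hcon; push_neg at hcon
  have hcnt := le_countLE_orderStat (q := q) h1 h2
  have hFne0 : (Finset.univ.filter (fun k => q k ≤ orderStat q i)).Nonempty := by
    apply Finset.card_pos.1
    calc 0 < i := h1
    _ ≤ countLE q (orderStat q i) := hcnt
  set F := (Finset.univ.filter (fun k => q k ≤ orderStat q i)).image q with hF
  have hFne' : F.Nonempty := hFne0.image q
  have hlt : F.max' hFne' < orderStat q i := by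
    rcases Finset.mem_image.1 (F.max'_mem hFne') with ⟨k, hk, hkeq⟩
    rw [← hkeq]
    exact lt_of_le_of_ne (Finset.mem_filter.1 hk).2 (hcon k)
  have hle : i ≤ countLE q (F.max' hFne') := by
    refine le_trans hcnt (Finset.card_le_card ?_)
    intro k hk
    have hk' := Finset.mem_filter.1 hk
    rw [Finset.mem_filter]
    exact ⟨hk'.1, Finset.le_max' _ _ (Finset.mem_image_of_mem q hk)⟩
  exact absurd ((orderStat_le_iff h1 h2 _).2 hle) (not_le.2 hlt)

lemma card_lt_of_orderStat {q : Fin m → ℝ} {i : ℕ} (h1 : 1 ≤ i) (h2 : i ≤ m) :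
    (Finset.univ.filter (fun l => q l < orderStat q i)).card < i := by
  by_contra hcon; push_neg at hcon
  have hFne0 : (Finset.univ.filter (fun l => q l < orderStat q i)).Nonempty := by
    apply Finset.card_pos.1
    calc 0 < i := h1
    _ ≤ _ := hcon
  set F := (Finset.univ.filter (fun l => q l < orderStat q i)).image q with hF
  have hFne' : F.Nonempty := hFne0.image q
  have hlt : F.max' hFne' < orderStat q i := by
    rcases Finset.mem_image.1 (F.max'_mem hFne') with ⟨k, hk, hkeq⟩
    rw [← hkeq]
    exact (Finset.mem_filter.1 hk).2
  have hle : i ≤ countLE q (F.max' hFne') := by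
    refine le_trans hcon (Finset.card_le_card ?_)
    intro k hk
    have hk' := Finset.mem_filter.1 hk
    rw [Finset.mem_filter]
    exact ⟨hk'.1, Finset.le_max' _ _ (Finset.mem_image_of_mem q hk)⟩
  exact absurd ((orderStat_le_iff h1 h2 _).2 hle) (not_le.2 hlt)

end BH

namespace BH

variable {m : ℕ}

lemma max_unbot'_mem {s : Finset ℕ} (h : s.Nonempty) : WithBot.unbotD 0 s.max ∈ s := by
  rw [← Finset.coe_max' h, WithBot.unbotD_coe]
  exact s.max'_mem h

lemma le_max_unbot' {s : Finset ℕ} {j : ℕ} (hj : j ∈ s) : j ≤ WithBot.unbotD 0 s.max := by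
  have h : s.Nonempty := ⟨j, hj⟩
  rw [← Finset.coe_max' h, WithBot.unbotD_coe]
  exact s.le_max' j hj

lemma sdR_eq (b : ℕ → ℝ) (q : Fin m → ℝ) :
    sdR b q = WithBot.unbotD 0 (((Finset.range (m+1)).filter
      (fun j => ∀ i ∈ Finset.Icc 1 j, orderStat q i ≤ b i)).max) := by
  unfold sdR
  congr 1

lemma sdRdata_eq (b : ℕ → ℝ) (q : Fin m → ℝ) :
    sdRdata b q = WithBot.unbotD 0 (((Finset.range (m+1)).filter
      (fun j => ∀ i ∈ Finset.Icc 1 j,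
        orderStat q i ≤ b (countLE q (orderStat q i)))).max) := by
  unfold sdRdata
  congr 1

lemma sdR_filter_nonempty (b : ℕ → ℝ) (q : Fin m → ℝ) :
    ((Finset.range (m+1)).filter
      (fun j => ∀ i ∈ Finset.Icc 1 j, orderStat q i ≤ b i)).Nonempty := by
  refine ⟨0, ?_⟩
  simp only [Finset.mem_filter, Finset.mem_range]
  refine ⟨Nat.succ_pos m, ?_⟩
  intro i hi
  exact absurd (Finset.mem_Icc.1 hi) (by omega)

lemma sdR_le (b : ℕ → ℝ) (q : Fin m → ℝ) : sdR b q ≤ m := by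
  rw [sdR_eq]
  have h := max_unbot'_mem (sdR_filter_nonempty b q)
  simp only [Finset.mem_filter, Finset.mem_range] at h
  omega

lemma sdR_spec (b : ℕ → ℝ) (q : Fin m → ℝ) :
    ∀ j ∈ Finset.Icc 1 (sdR b q), orderStat q j ≤ b j := by
  rw [sdR_eq]
  have h := max_unbot'_mem (sdR_filter_nonempty b q)
  simp only [Finset.mem_filter] at h
  exact h.2

lemma le_sdR (b : ℕ → ℝ) (q : Fin m → ℝ) {j : ℕ} (hj : j ≤ m)
    (h : ∀ i ∈ Finset.Icc 1 j, orderStat q i ≤ b i) : j ≤ sdR b q := by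
  rw [sdR_eq]
  apply le_max_unbot'
  simp only [Finset.mem_filter, Finset.mem_range]
  exact ⟨by omega, h⟩

lemma le_sdR_iff (b : ℕ → ℝ) (q : Fin m → ℝ) {r : ℕ} :
    r ≤ sdR b q ↔ (r ≤ m ∧ ∀ i ∈ Finset.Icc 1 r, orderStat q i ≤ b i) := by
  constructor
  · intro h
    refine ⟨h.trans (sdR_le b q), fun i hi => ?_⟩
    have hi' := Finset.mem_Icc.1 hi
    exact sdR_spec b q i (Finset.mem_Icc.2 ⟨hi'.1, hi'.2.trans h⟩)
  · intro h
    exact le_sdR b q h.1 h.2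

lemma sdRdata_filter_nonempty (b : ℕ → ℝ) (q : Fin m → ℝ) :
    ((Finset.range (m+1)).filter
      (fun j => ∀ i ∈ Finset.Icc 1 j,
        orderStat q i ≤ b (countLE q (orderStat q i)))).Nonempty := by
  refine ⟨0, ?_⟩
  simp only [Finset.mem_filter, Finset.mem_range]
  refine ⟨Nat.succ_pos m, ?_⟩
  intro i hi
  exact absurd (Finset.mem_Icc.1 hi) (by omega)

lemma sdRdata_le (b : ℕ → ℝ) (q : Fin m → ℝ) : sdRdata b q ≤ m := by
  rw [sdRdata_eq]
  have h := max_unbot'_mem (sdRdata_filter_nonempty b q)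
  simp only [Finset.mem_filter, Finset.mem_range] at h
  omega

lemma sdRdata_spec (b : ℕ → ℝ) (q : Fin m → ℝ) :
    ∀ j ∈ Finset.Icc 1 (sdRdata b q),
      orderStat q j ≤ b (countLE q (orderStat q j)) := by
  rw [sdRdata_eq]
  have h := max_unbot'_mem (sdRdata_filter_nonempty b q)
  simp only [Finset.mem_filter] at h
  exact h.2

lemma le_sdRdata (b : ℕ → ℝ) (q : Fin m → ℝ) {j : ℕ} (hj : j ≤ m)
    (h : ∀ i ∈ Finset.Icc 1 j, orderStat q i ≤ b (countLE q (orderStat q i))) :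
    j ≤ sdRdata b q := by
  rw [sdRdata_eq]
  apply le_max_unbot'
  simp only [Finset.mem_filter, Finset.mem_range]
  exact ⟨by omega, h⟩

lemma le_sdRdata_iff (b : ℕ → ℝ) (q : Fin m → ℝ) {r : ℕ} :
    r ≤ sdRdata b q ↔
      (r ≤ m ∧ ∀ i ∈ Finset.Icc 1 r, orderStat q i ≤ b (countLE q (orderStat q i))) := by
  constructor
  · intro h
    refine ⟨h.trans (sdRdata_le b q), fun i hi => ?_⟩
    have hi' := Finset.mem_Icc.1 hi
    exact sdRdata_spec b q i (Finset.mem_Icc.2 ⟨hi'.1, hi'.2.trans h⟩)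
  · intro h
    exact le_sdRdata b q h.1 h.2

/-! ### Key combinatorial lemmas -/

/-- Self-consistency of the plain step-down BH procedure. -/
lemma sdR_selfcons {α : ℝ} (q : Fin m → ℝ) (h1 : 1 ≤ sdR (bh m α) q) :
    orderStat q (sdR (bh m α) q) ≤ (sdR (bh m α) q : ℝ) * α / m :=
  sdR_spec (bh m α) q _ (Finset.mem_Icc.2 ⟨h1, le_rfl⟩)

/-- Monotonicity of the plain step-down procedure. -/
lemma sdR_antitone {α : ℝ} {q q' : Fin m → ℝ} (h : ∀ k, q k ≤ q' k) :
    sdR (bh m α) q' ≤ sdR (bh m α) q := by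
  refine le_sdR (bh m α) q (sdR_le (bh m α) q') (fun i hi => ?_)
  have hi' := Finset.mem_Icc.1 hi
  have him : i ≤ m := hi'.2.trans (sdR_le (bh m α) q')
  exact le_trans (orderStat_anti h hi'.1 him) (sdR_spec (bh m α) q' i hi)

/-- At the data-dependent step-down rejection number, `countLE` equals `R`,
hence self-consistency. -/
lemma sdRdata_countLE {α : ℝ} (q : Fin m → ℝ) (h1 : 1 ≤ sdRdata (bh m α) q) :
    countLE q (orderStat q (sdRdata (bh m α) q)) = sdRdata (bh m α) q := by
  set R := sdRdata (bh m α) q with hR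
  have hRm : R ≤ m := sdRdata_le (bh m α) q
  have hK : R ≤ countLE q (orderStat q R) := le_countLE_orderStat h1 hRm
  have hKm : countLE q (orderStat q R) ≤ m := countLE_le q _
  have hKR : countLE q (orderStat q R) ≤ R := by
    refine le_sdRdata (bh m α) q hKm (fun j hj => ?_)
    have hj' := Finset.mem_Icc.1 hj
    rcases le_or_gt j R with hle | hlt
    · exact sdRdata_spec (bh m α) q j (Finset.mem_Icc.2 ⟨hj'.1, hle⟩)
    · have hjm : j ≤ m := hj'.2.trans hKm
      have heq : orderStat q j = orderStat q R := by
        refine le_antisymm ?_ (orderStat_mono h1 hlt.le hjm)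
        exact (orderStat_le_iff hj'.1 hjm _).2 hj'.2
      rw [heq]
      exact sdRdata_spec (bh m α) q R (Finset.mem_Icc.2 ⟨h1, le_rfl⟩)
  exact le_antisymm hKR hK

lemma sdRdata_selfcons {α : ℝ} (q : Fin m → ℝ) (h1 : 1 ≤ sdRdata (bh m α) q) :
    orderStat q (sdRdata (bh m α) q) ≤ (sdRdata (bh m α) q : ℝ) * α / m := by
  have h := sdRdata_spec (bh m α) q _ (Finset.mem_Icc.2 ⟨h1, le_rfl⟩)
  rw [sdRdata_countLE q h1] at h
  exact h

/-- The key monotonicity property of the data-dependent step-down procedure on the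
self-consistency event. -/
lemma sdRdata_antitone (hm : 1 ≤ m) {α : ℝ} (hα : 0 < α) {q q' : Fin m → ℝ} (i0 : Fin m)
    (hqq' : ∀ k, k ≠ i0 → q k = q' k) (hle : q i0 ≤ q' i0)
    (hself : q i0 ≤ (sdRdata (bh m α) q : ℝ) * α / m) :
    sdRdata (bh m α) q' ≤ sdRdata (bh m α) q := by
  set R := sdRdata (bh m α) q with hRdef
  set R' := sdRdata (bh m α) q' with hR'def
  by_contra hcon
  push_neg at hcon
  have hqle : ∀ k, q k ≤ q' k := by
    intro k
    by_cases h : k = i0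
    · rw [h]; exact hle
    · exact (hqq' k h).le
  have hR'm : R' ≤ m := sdRdata_le (bh m α) q'
  have hR1m : R + 1 ≤ m := le_trans (Nat.succ_le_of_lt hcon) hR'm
  have h1R1 : 1 ≤ R + 1 := Nat.succ_le_succ (Nat.zero_le R)
  have hmpos : (0:ℝ) < m := by exact_mod_cast Nat.lt_of_lt_of_le Nat.zero_lt_one hm
  have hbad : ¬ (orderStat q (R+1) ≤ bh m α (countLE q (orderStat q (R+1)))) := by
    intro h
    have hmem : R + 1 ≤ R := by
      refine le_sdRdata (bh m α) q hR1m (fun j hj => ?_)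
      have hj' := Finset.mem_Icc.1 hj
      rcases Nat.lt_succ_iff_lt_or_eq.1 (Nat.lt_succ_of_le hj'.2) with hjR | hjeq
      · exact sdRdata_spec (bh m α) q j (Finset.mem_Icc.2 ⟨hj'.1, Nat.lt_succ_iff.1 hjR⟩)
      · rw [hjeq]; exact h
    omega
  push_neg at hbad
  set t := orderStat q (R+1) with htdef
  obtain ⟨k, hk⟩ := exists_orderStat_eq (q := q) h1R1 hR1m
  by_cases hki : k = i0
  · -- the failing order statistic is the modified coordinate itself
    have hcnt : R + 1 ≤ countLE q t := le_countLE_orderStat h1R1 hR1m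
    have h1 : ((R:ℝ) + 1) * α / m ≤ (countLE q t : ℝ) * α / m := by
      have : ((R:ℝ) + 1) ≤ (countLE q t : ℝ) := by exact_mod_cast hcnt
      have h2 := mul_le_mul_of_nonneg_right this hα.le
      exact (div_le_div_iff_of_pos_right hmpos).2 h2
    have h2 : t ≤ (R : ℝ) * α / m := by rw [htdef, ← hk, hki]; exact hself
    have h3 : (countLE q t : ℝ) * α / m < t := hbad
    have h4 : (R:ℝ) * α / m < ((R:ℝ)+1) * α / m := by
      refine (div_lt_div_iff_of_pos_right hmpos).2 ?_
      have : (R:ℝ) < (R:ℝ) + 1 := by linarith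
      exact mul_lt_mul_of_pos_right this hα
    linarith
  · -- the failing order statistic is another coordinate, present in `q'` too
    have hq'k : q' k = t := by rw [← hqq' k hki]; exact hk
    set i1 := (Finset.univ.filter (fun l => q' l < t)).card + 1 with hi1def
    have hsub : (Finset.univ.filter (fun l => q' l < t)) ⊆
        (Finset.univ.filter (fun l => q l < t)) := by
      intro l hl
      have hl' := Finset.mem_filter.1 hl
      exact Finset.mem_filter.2 ⟨hl'.1, lt_of_le_of_lt (hqle l) hl'.2⟩
    have hltR : (Finset.univ.filter (fun l => q l < t)).card < R + 1 :=
      card_lt_of_orderStat h1R1 hR1m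
    have hi1le : i1 ≤ R + 1 := by
      have := Finset.card_le_card hsub
      omega
    have hi1m : i1 ≤ m := hi1le.trans hR1m
    have hi11 : 1 ≤ i1 := Nat.succ_le_succ (Nat.zero_le _)
    have hcard : i1 ≤ countLE q' t := by
      have hins : insert k (Finset.univ.filter (fun l => q' l < t)) ⊆
          Finset.univ.filter (fun l => q' l ≤ t) := by
        intro l hl
        rcases Finset.mem_insert.1 hl with hlk | hlf
        · rw [hlk]; exact Finset.mem_filter.2 ⟨Finset.mem_univ _, hq'k.le⟩
        · have hl' := Finset.mem_filter.1 hlf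
          exact Finset.mem_filter.2 ⟨hl'.1, hl'.2.le⟩
      have hknotmem : k ∉ Finset.univ.filter (fun l => q' l < t) := by
        intro hmem
        exact absurd ((Finset.mem_filter.1 hmem).2) (by rw [hq'k]; exact lt_irrefl t)
      have := Finset.card_le_card hins
      rw [Finset.card_insert_of_notMem hknotmem] at this
      exact this
    have hup : orderStat q' i1 ≤ t := (orderStat_le_iff hi11 hi1m t).2 hcard
    have hdown : t ≤ orderStat q' i1 := by
      refine le_of_forall_lt (fun s hst => ?_)
      by_contra hcon2
      push_neg at hcon2
      have hcnt' := (orderStat_le_iff hi11 hi1m s).1 hcon2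
      have hsub2 : Finset.univ.filter (fun l => q' l ≤ s) ⊆
          Finset.univ.filter (fun l => q' l < t) := by
        intro l hl
        have hl' := Finset.mem_filter.1 hl
        exact Finset.mem_filter.2 ⟨hl'.1, lt_of_le_of_lt hl'.2 hst⟩
      have hcards := Finset.card_le_card hsub2
      have hceq : countLE q' s = (Finset.univ.filter (fun l => q' l ≤ s)).card := rfl
      omega
    have heq : orderStat q' i1 = t := le_antisymm hup hdown
    have hcnd := sdRdata_spec (bh m α) q' i1
      (Finset.mem_Icc.2 ⟨hi11, hi1le.trans (Nat.succ_le_of_lt hcon)⟩)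
    rw [heq] at hcnd
    have hcc : countLE q' t ≤ countLE q t := countLE_anti q q' hqle t
    have hfin : (countLE q' t : ℝ) * α / m ≤ (countLE q t : ℝ) * α / m := by
      have : (countLE q' t : ℝ) ≤ (countLE q t : ℝ) := by exact_mod_cast hcc
      have h2 := mul_le_mul_of_nonneg_right this hα.le
      exact (div_le_div_iff_of_pos_right hmpos).2 h2
    have hbad' : (countLE q t : ℝ) * α / m < t := hbad
    have hcnd' : t ≤ (countLE q' t : ℝ) * α / m := hcnd
    linarith

end BH

namespace BH

variable {m : ℕ}

lemma countLE_cast (q : Fin m → ℝ) (t : ℝ) :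
    ((countLE q t : ℕ) : ℝ) = ∑ k : Fin m, if q k ≤ t then (1:ℝ) else 0 := by
  rw [countLE, Finset.card_filter, Nat.cast_sum]
  refine Finset.sum_congr rfl (fun k _ => ?_)
  split <;> simp

lemma measurable_countLE_comp {f : (Fin m → ℝ) → ℝ} (hf : Measurable f) :
    Measurable (fun q : Fin m → ℝ => ((countLE q (f q) : ℕ) : ℝ)) := by
  have he : (fun q : Fin m → ℝ => ((countLE q (f q) : ℕ) : ℝ))
      = fun q => ∑ k : Fin m, if q k ≤ f q then (1:ℝ) else 0 := by
    funext q; exact countLE_cast q (f q)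
  rw [he]
  apply Finset.measurable_sum
  intro k _
  exact Measurable.ite (measurableSet_le (measurable_pi_apply k) hf)
    measurable_const measurable_const

lemma measurable_orderStat {i : ℕ} (h1 : 1 ≤ i) (h2 : i ≤ m) :
    Measurable (fun q : Fin m → ℝ => orderStat q i) := by
  apply measurable_of_Iic
  intro t
  have he : (fun q : Fin m → ℝ => orderStat q i) ⁻¹' (Set.Iic t)
      = {q : Fin m → ℝ | (i:ℝ) ≤ ((countLE q t : ℕ) : ℝ)} := by
    ext q
    simp only [Set.mem_preimage, Set.mem_Iic, Set.mem_setOf_eq]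
    rw [orderStat_le_iff h1 h2 t]
    exact (Nat.cast_le (α := ℝ)).symm
  rw [he]
  exact measurableSet_le measurable_const (measurable_countLE_comp measurable_const)

lemma measurable_sdR (α : ℝ) : Measurable (fun q : Fin m → ℝ => sdR (bh m α) q) := by
  have hs : ∀ r : ℕ, MeasurableSet {q : Fin m → ℝ | r ≤ sdR (bh m α) q} := by
    intro r
    by_cases hr : r ≤ m
    · have he : {q : Fin m → ℝ | r ≤ sdR (bh m α) q}
          = ⋂ i ∈ Finset.Icc 1 r, {q : Fin m → ℝ | orderStat q i ≤ bh m α i} := by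
        ext q
        simp only [Set.mem_setOf_eq, Set.mem_iInter]
        rw [le_sdR_iff (bh m α) q]
        constructor
        · rintro ⟨-, h⟩ i hi
          exact h i hi
        · intro h
          exact ⟨hr, h⟩
      rw [he]
      refine MeasurableSet.biInter (Finset.Icc 1 r).countable_toSet (fun i hi => ?_)
      have hi' := Finset.mem_Icc.1 hi
      exact measurableSet_le (measurable_orderStat hi'.1 (hi'.2.trans hr)) measurable_const
    · have he : {q : Fin m → ℝ | r ≤ sdR (bh m α) q} = ∅ := by
        ext q
        simp only [Set.mem_setOf_eq, Set.mem_empty_iff_false, iff_false, not_le]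
        exact lt_of_le_of_lt (sdR_le (bh m α) q) (by omega)
      rw [he]
      exact MeasurableSet.empty
  apply measurable_to_countable'
  intro n
  have he : (fun q : Fin m → ℝ => sdR (bh m α) q) ⁻¹' {n}
      = {q : Fin m → ℝ | n ≤ sdR (bh m α) q} \ {q | n + 1 ≤ sdR (bh m α) q} := by
    ext q
    simp only [Set.mem_preimage, Set.mem_singleton_iff, Set.mem_diff, Set.mem_setOf_eq, not_le]
    omega
  rw [he]
  exact (hs n).diff (hs (n+1))

lemma measurable_sdRdata (α : ℝ) :
    Measurable (fun q : Fin m → ℝ => sdRdata (bh m α) q) := by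
  have hcset : ∀ i : ℕ, 1 ≤ i → i ≤ m →
      MeasurableSet {q : Fin m → ℝ | orderStat q i ≤ bh m α (countLE q (orderStat q i))} := by
    intro i h1 h2
    have hg : Measurable (fun q : Fin m → ℝ =>
        ((countLE q (orderStat q i) : ℕ) : ℝ) * α / m) :=
      ((measurable_countLE_comp (measurable_orderStat h1 h2)).mul_const α).div_const _
    exact measurableSet_le (measurable_orderStat h1 h2) hg
  have hs : ∀ r : ℕ, MeasurableSet {q : Fin m → ℝ | r ≤ sdRdata (bh m α) q} := by
    intro r
    by_cases hr : r ≤ m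
    · have he : {q : Fin m → ℝ | r ≤ sdRdata (bh m α) q}
          = ⋂ i ∈ Finset.Icc 1 r,
            {q : Fin m → ℝ | orderStat q i ≤ bh m α (countLE q (orderStat q i))} := by
        ext q
        simp only [Set.mem_setOf_eq, Set.mem_iInter]
        rw [le_sdRdata_iff (bh m α) q]
        constructor
        · rintro ⟨-, h⟩ i hi
          exact h i hi
        · intro h
          exact ⟨hr, h⟩
      rw [he]
      refine MeasurableSet.biInter (Finset.Icc 1 r).countable_toSet (fun i hi => ?_)
      have hi' := Finset.mem_Icc.1 hi
      exact hcset i hi'.1 (hi'.2.trans hr)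
    · have he : {q : Fin m → ℝ | r ≤ sdRdata (bh m α) q} = ∅ := by
        ext q
        simp only [Set.mem_setOf_eq, Set.mem_empty_iff_false, iff_false, not_le]
        exact lt_of_le_of_lt (sdRdata_le (bh m α) q) (by omega)
      rw [he]
      exact MeasurableSet.empty
  apply measurable_to_countable'
  intro n
  have he : (fun q : Fin m → ℝ => sdRdata (bh m α) q) ⁻¹' {n}
      = {q : Fin m → ℝ | n ≤ sdRdata (bh m α) q} \ {q | n + 1 ≤ sdRdata (bh m α) q} := by
    ext q
    simp only [Set.mem_preimage, Set.mem_singleton_iff, Set.mem_diff, Set.mem_setOf_eq, not_le]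
    omega
  rw [he]
  exact (hs n).diff (hs (n+1))

/-! ### Recombination of a vector from one coordinate and the others -/

def recomb (i : Fin m) (w : {k : Fin m // k ≠ i} → ℝ) (u : ℝ) : Fin m → ℝ :=
  fun k => if h : k = i then u else w ⟨k, h⟩

lemma recomb_same (i : Fin m) (w : {k : Fin m // k ≠ i} → ℝ) (u : ℝ) :
    recomb i w u i = u := dif_pos rfl

lemma recomb_other (i : Fin m) (w : {k : Fin m // k ≠ i} → ℝ) (u : ℝ) {k : Fin m}
    (h : k ≠ i) : recomb i w u k = w ⟨k, h⟩ := dif_neg h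

lemma recomb_self (i : Fin m) (q : Fin m → ℝ) :
    recomb i (fun k : {k : Fin m // k ≠ i} => q k.1) (q i) = q := by
  funext k
  by_cases h : k = i
  · rw [h, recomb_same]
  · rw [recomb_other i _ _ h]

lemma measurable_recomb (i : Fin m) :
    Measurable (fun x : ({k : Fin m // k ≠ i} → ℝ) × ℝ => recomb i x.1 x.2) := by
  apply measurable_pi_lambda
  intro k
  by_cases h : k = i
  · simp only [recomb, dif_pos h]
    exact measurable_snd
  · simp only [recomb, dif_neg h]
    exact (measurable_pi_apply (⟨k, h⟩ : {k : Fin m // k ≠ i})).comp measurable_fst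

/-! ### The one-coordinate integral bound -/

lemma inner_bound {ν : Measure ℝ} [IsProbabilityMeasure ν] {c : ℝ} (hc : 0 < c)
    (hν : ∀ x : ℝ, 0 ≤ x → x ≤ 1 → ν (Set.Iic x) ≤ ENNReal.ofReal x)
    (hae : ∀ᵐ u ∂ν, u ∈ Set.Icc (0:ℝ) 1)
    (g : ℝ → ℕ) (E : Set ℝ) (f : ℝ → ℝ)
    (hf : ∀ u, f u = if u ∈ E then (((max (g u) 1 : ℕ) : ℝ))⁻¹ else 0)
    (hg1 : ∀ u ∈ E, 1 ≤ g u)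
    (h2 : ∀ u ∈ E, ∀ u' ∈ E, u' ≤ c * (g u : ℝ)) :
    ∫ u, f u ∂ν ≤ c := by
  rcases E.eq_empty_or_nonempty with hE | hE
  · have hf0 : f = fun _ => (0:ℝ) := by
      funext u
      rw [hf u, hE]
      simp
    rw [hf0]
    simp only [integral_zero]
    exact hc.le
  · have himg : (g '' E).Nonempty := hE.image g
    have hmem := Nat.sInf_mem himg
    obtain ⟨u0, hu0E, hgu0⟩ := hmem
    have hu0min : ∀ u ∈ E, g u0 ≤ g u := by
      intro u hu
      rw [hgu0]
      exact Nat.sInf_le ⟨u, hu, rfl⟩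
    set gmin := g u0 with hgmindef
    have hgmin1 : 1 ≤ gmin := hg1 u0 hu0E
    have hgminpos : (0:ℝ) < (gmin:ℝ) := by exact_mod_cast Nat.lt_of_lt_of_le Nat.zero_lt_one hgmin1
    set x := min (c * (gmin:ℝ)) 1 with hxdef
    have hx0 : 0 ≤ x := le_min (by positivity) zero_le_one
    have hbnd : ∀ᵐ u ∂ν, f u ≤ ((gmin:ℝ))⁻¹ * (Set.Iic x).indicator (fun _ => (1:ℝ)) u := by
      filter_upwards [hae] with u hu
      rw [hf u]
      by_cases hEu : u ∈ E
      · rw [if_pos hEu]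
        have hmax : max (g u) 1 = g u := max_eq_left (hg1 u hEu)
        rw [hmax]
        have hux : u ∈ Set.Iic x := Set.mem_Iic.2 (le_min (h2 u0 hu0E u hEu) hu.2)
        rw [Set.indicator_of_mem hux, mul_one]
        have hcast : (gmin:ℝ) ≤ (g u : ℝ) := by exact_mod_cast hu0min u hEu
        exact inv_anti₀ hgminpos hcast
      · rw [if_neg hEu]
        exact mul_nonneg (inv_nonneg.2 hgminpos.le)
          (Set.indicator_nonneg (fun _ _ => zero_le_one) u)
    have hint : Integrable
        (fun u => ((gmin:ℝ))⁻¹ * (Set.Iic x).indicator (fun _ => (1:ℝ)) u) ν :=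
      Integrable.const_mul ((integrable_const (1:ℝ)).indicator measurableSet_Iic) _
    have hnn : 0 ≤ᵐ[ν] f := by
      refine ae_of_all _ (fun u => ?_)
      rw [hf u]
      split
      · positivity
      · exact le_rfl
    calc ∫ u, f u ∂ν
        ≤ ∫ u, ((gmin:ℝ))⁻¹ * (Set.Iic x).indicator (fun _ => (1:ℝ)) u ∂ν :=
          integral_mono_of_nonneg hnn hint hbnd
      _ = ((gmin:ℝ))⁻¹ * ((ν (Set.Iic x)).toReal) := by
          rw [integral_const_mul, integral_indicator_const (1:ℝ) measurableSet_Iic]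
          simp [smul_eq_mul, Measure.real]
      _ ≤ ((gmin:ℝ))⁻¹ * x := by
          refine mul_le_mul_of_nonneg_left ?_ (inv_nonneg.2 hgminpos.le)
          exact ENNReal.toReal_le_of_le_ofReal hx0 (hν x hx0 (min_le_right _ _))
      _ ≤ ((gmin:ℝ))⁻¹ * (c * (gmin:ℝ)) :=
          mul_le_mul_of_nonneg_left (min_le_left _ _) (inv_nonneg.2 hgminpos.le)
      _ = c := by field_simp

end BH

namespace BH

variable {m : ℕ}

lemma comap_comp_le {A B C : Type*} [mb : MeasurableSpace B] [mc : MeasurableSpace C]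
    (W : A → B) (φ : B → C) (hφ : Measurable φ) :
    MeasurableSpace.comap (fun a => φ (W a)) mc ≤ MeasurableSpace.comap W mb := by
  have h : (fun a => φ (W a)) = φ ∘ W := rfl
  rw [h, ← MeasurableSpace.comap_comp]
  exact MeasurableSpace.comap_mono hφ.comap_le

lemma indep_coord {Ω : Type*} [MeasurableSpace Ω] (μ : Measure Ω) [IsProbabilityMeasure μ]
    (I0 : Finset (Fin m)) (p : Ω → Fin m → ℝ)
    (hmeas : ∀ i, Measurable (fun ω => p ω i))
    (hBI2 : IndepFun (fun ω (i : {i // i ∈ I0}) => p ω i)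
      (fun ω (i : {i // i ∉ I0}) => p ω i) μ)
    (hBI3 : iIndepFun (fun (i : {i // i ∈ I0}) ω => p ω i.1) μ)
    {i : Fin m} (hi : i ∈ I0) :
    IndepFun (fun ω => p ω i) (fun ω (k : {k : Fin m // k ≠ i}) => p ω k.1) μ := by
  set i' : {j // j ∈ I0} := ⟨i, hi⟩ with hi'def
  set X : Ω → ℝ := fun ω => p ω i with hX
  set fNN : Ω → ({j // j ∈ I0} → ℝ) := fun ω j => p ω j.1 with hfNN
  set fC : Ω → ({j // j ∉ I0} → ℝ) := fun ω j => p ω j.1 with hfC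
  set fT : Ω → ({x // x ∈ Finset.univ.erase i'} → ℝ) := fun ω x => p ω x.1.1 with hfT
  set Z : Ω → ({k : Fin m // k ≠ i} → ℝ) := fun ω k => p ω k.1 with hZ
  have hmeasNN : Measurable fNN := measurable_pi_lambda _ (fun j => hmeas j.1)
  have hmeasC : Measurable fC := measurable_pi_lambda _ (fun j => hmeas j.1)
  have hmeasT : Measurable fT := measurable_pi_lambda _ (fun x => hmeas x.1.1)
  have hmeasZ : Measurable Z := measurable_pi_lambda _ (fun k => hmeas k.1)
  have hfin := hBI3.indepFun_finset {i'} (Finset.univ.erase i')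
    (Finset.disjoint_singleton_left.2 (Finset.notMem_erase i' Finset.univ))
    (fun j => hmeas j.1)
  have hAB : Indep (MeasurableSpace.comap X inferInstance)
      (MeasurableSpace.comap fT inferInstance) μ := by
    have h1 := (IndepFun_iff_Indep _ _ μ).1 hfin
    refine indep_of_indep_of_le_left h1 ?_
    exact comap_comp_le
      (fun a (x : {x // x ∈ ({i'} : Finset {j // j ∈ I0})}) => p a x.1.1)
      (fun v => v ⟨i', Finset.mem_singleton_self i'⟩) (measurable_pi_apply _)
  have hNNC : Indep (MeasurableSpace.comap fNN inferInstance)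
      (MeasurableSpace.comap fC inferInstance) μ := (IndepFun_iff_Indep _ _ μ).1 hBI2
  have hAle : MeasurableSpace.comap X inferInstance
      ≤ MeasurableSpace.comap fNN inferInstance :=
    comap_comp_le fNN (fun v => v i') (measurable_pi_apply _)
  have hBle : MeasurableSpace.comap fT inferInstance
      ≤ MeasurableSpace.comap fNN inferInstance :=
    comap_comp_le fNN (fun v (x : {x // x ∈ Finset.univ.erase i'}) => v x.1)
      (measurable_pi_lambda _ (fun x => measurable_pi_apply _))
  have hBC : Indep (MeasurableSpace.comap fT inferInstance)
      (MeasurableSpace.comap fC inferInstance) μ := indep_of_indep_of_le_left hNNC hBle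
  have hgoal : Indep (MeasurableSpace.comap X inferInstance)
      (MeasurableSpace.comap fT inferInstance ⊔ MeasurableSpace.comap fC inferInstance) μ := by
    refine IndepSets.indep
      (p1 := {s | MeasurableSet[MeasurableSpace.comap X inferInstance] s})
      (p2 := {s | ∃ b c, MeasurableSet[MeasurableSpace.comap fT inferInstance] b ∧
        MeasurableSet[MeasurableSpace.comap fC inferInstance] c ∧ s = b ∩ c})
      ((hmeas i).comap_le) (sup_le hmeasT.comap_le hmeasC.comap_le) ?_ ?_ ?_ ?_ ?_
    · intro s hs t ht _
      have hs' : MeasurableSet[MeasurableSpace.comap X inferInstance] s := hs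
      have ht' : MeasurableSet[MeasurableSpace.comap X inferInstance] t := ht
      exact hs'.inter ht'
    · rintro s ⟨b, cs, hb, hcs, rfl⟩ t ⟨b', cs', hb', hcs', rfl⟩ _
      exact ⟨b ∩ b', cs ∩ cs', hb.inter hb', hcs.inter hcs', Set.inter_inter_inter_comm _ _ _ _⟩
    · exact (@MeasurableSpace.generateFrom_measurableSet Ω
        (MeasurableSpace.comap X inferInstance)).symm
    · refine le_antisymm ?_ (MeasurableSpace.generateFrom_le ?_)
      · refine sup_le ?_ ?_
        · intro s hs
          exact MeasurableSpace.measurableSet_generateFrom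
            ⟨s, Set.univ, hs, MeasurableSet.univ, (Set.inter_univ s).symm⟩
        · intro s hs
          exact MeasurableSpace.measurableSet_generateFrom
            ⟨Set.univ, s, MeasurableSet.univ, hs, (Set.univ_inter s).symm⟩
      · rintro s ⟨b, cs, hb, hcs, rfl⟩
        exact MeasurableSet.inter
          ((le_sup_left : MeasurableSpace.comap fT inferInstance ≤ _) b hb)
          ((le_sup_right : MeasurableSpace.comap fC inferInstance ≤ _) cs hcs)
    · rw [IndepSets_iff]
      rintro s t hs ⟨b, cs, hb, hcs, rfl⟩
      have e1 : μ (s ∩ b) = μ s * μ b := (Indep_iff _ _ _).1 hAB s b hs hb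
      have e2 : μ ((s ∩ b) ∩ cs) = μ (s ∩ b) * μ cs :=
        (Indep_iff _ _ _).1 hNNC (s ∩ b) cs (MeasurableSet.inter (hAle s hs) (hBle b hb)) hcs
      have e3 : μ (b ∩ cs) = μ b * μ cs := (Indep_iff _ _ _).1 hBC b cs hb hcs
      calc μ (s ∩ (b ∩ cs)) = μ ((s ∩ b) ∩ cs) := by rw [Set.inter_assoc]
        _ = μ s * μ b * μ cs := by rw [e2, e1]
        _ = μ s * (μ b * μ cs) := by ring
        _ = μ s * μ (b ∩ cs) := by rw [e3]
  have hZle : MeasurableSpace.comap Z MeasurableSpace.pi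
      ≤ MeasurableSpace.comap fT inferInstance ⊔ MeasurableSpace.comap fC inferInstance := by
    rw [MeasurableSpace.pi, MeasurableSpace.comap_iSup]
    refine iSup_le (fun k => ?_)
    rw [MeasurableSpace.comap_comp]
    by_cases hk : (k : Fin m) ∈ I0
    · refine le_trans ?_ le_sup_left
      have hmem : (⟨k.1, hk⟩ : {j // j ∈ I0}) ∈ Finset.univ.erase i' := by
        refine Finset.mem_erase.2 ⟨?_, Finset.mem_univ _⟩
        intro hcon
        exact k.2 (congrArg Subtype.val hcon)
      exact comap_comp_le fT
        (fun v : ({x // x ∈ Finset.univ.erase i'} → ℝ) => v ⟨⟨k.1, hk⟩, hmem⟩)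
        (measurable_pi_apply _)
    · refine le_trans ?_ le_sup_right
      exact comap_comp_le fC (fun v : ({j // j ∉ I0} → ℝ) => v ⟨k.1, hk⟩)
        (measurable_pi_apply _)
  have hfinal : Indep (MeasurableSpace.comap X inferInstance)
      (MeasurableSpace.comap Z MeasurableSpace.pi) μ :=
    indep_of_indep_of_le_right hgoal hZle
  exact (IndepFun_iff_Indep X Z μ).2 hfinal

end BH

namespace BH

variable {m : ℕ}

def Dfun (R : (Fin m → ℝ) → ℕ) : (Fin m → ℝ) → ℝ :=
  fun q => (((max (R q) 1 : ℕ) : ℝ))⁻¹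

def rejSet (R : (Fin m → ℝ) → ℕ) (i : Fin m) : Set (Fin m → ℝ) :=
  {q | 1 ≤ R q ∧ q i ≤ orderStat q (R q)}

def Gfun (R : (Fin m → ℝ) → ℕ) (i : Fin m) : (Fin m → ℝ) → ℝ :=
  fun q => (rejSet R i).indicator (Dfun R) q

lemma Gfun_nonneg (R : (Fin m → ℝ) → ℕ) (i : Fin m) (q : Fin m → ℝ) :
    0 ≤ Gfun R i q := by
  refine Set.indicator_nonneg (fun x _ => ?_) q
  rw [Dfun]
  positivity

lemma Gfun_le_one (R : (Fin m → ℝ) → ℕ) (i : Fin m) (q : Fin m → ℝ) :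
    Gfun R i q ≤ 1 := by
  refine Set.indicator_le' (fun x _ => ?_) (fun x _ => zero_le_one) q
  rw [Dfun]
  have h1 : (1:ℝ) ≤ ((max (R x) 1 : ℕ) : ℝ) := by
    exact_mod_cast le_max_right (R x) 1
  rw [inv_eq_one_div]
  exact div_le_one_of_le₀ h1 (by positivity)

lemma measurable_Gfun (R : (Fin m → ℝ) → ℕ) (hRmeas : Measurable R) (hRm : ∀ q, R q ≤ m)
    (i : Fin m) : Measurable (Gfun R i) := by
  refine Measurable.indicator ?_ ?_
  · exact (measurable_from_nat (f := fun n : ℕ => (((max n 1 : ℕ) : ℝ))⁻¹)).comp hRmeas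
  · have he : rejSet R i = ⋃ r ∈ Set.Icc 1 m,
        (R ⁻¹' {r} ∩ {q : Fin m → ℝ | q i ≤ orderStat q r}) := by
      ext q
      simp only [rejSet, Set.mem_setOf_eq, Set.mem_iUnion, Set.mem_inter_iff, Set.mem_preimage,
        Set.mem_singleton_iff, Set.mem_Icc]
      constructor
      · rintro ⟨h1, h2⟩
        exact ⟨R q, ⟨h1, hRm q⟩, rfl, h2⟩
      · rintro ⟨r, ⟨hr1, hr2⟩, hq, h2⟩
        subst hq
        exact ⟨hr1, h2⟩
    rw [he]
    refine MeasurableSet.biUnion (Set.to_countable _) (fun r hr => ?_)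
    exact (hRmeas (measurableSet_singleton r)).inter
      (measurableSet_le (measurable_pi_apply i) (measurable_orderStat hr.1 hr.2))

theorem main_bound {Ω : Type*} [MeasurableSpace Ω] (μ : Measure Ω) [IsProbabilityMeasure μ]
    (hm : 1 ≤ m) {α : ℝ} (hα : 0 < α)
    (I0 : Finset (Fin m)) (p : Ω → Fin m → ℝ)
    (hmeas : ∀ i, Measurable (fun ω => p ω i))
    (hrange : ∀ ω i, p ω i ∈ Set.Icc (0:ℝ) 1)
    (hBI2 : IndepFun (fun ω (i : {i // i ∈ I0}) => p ω i)
      (fun ω (i : {i // i ∉ I0}) => p ω i) μ)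
    (hBI3 : iIndepFun (fun (i : {i // i ∈ I0}) ω => p ω i.1) μ)
    (hstoch : ∀ i ∈ I0, ∀ x ∈ Set.Icc (0:ℝ) 1, μ {ω | p ω i ≤ x} ≤ ENNReal.ofReal x)
    (R : (Fin m → ℝ) → ℕ) (hRmeas : Measurable R) (hRm : ∀ q, R q ≤ m)
    (hsc : ∀ q, 1 ≤ R q → orderStat q (R q) ≤ (R q : ℝ) * α / m)
    (hmono : ∀ (q q' : Fin m → ℝ) (i0 : Fin m), (∀ k, k ≠ i0 → q k = q' k) → q i0 ≤ q' i0 →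
        q i0 ≤ (R q : ℝ) * α / m → R q' ≤ R q) :
    FDR μ p I0 R (fun q j => 1 ≤ R q ∧ q j ≤ orderStat q (R q)) ≤ (I0.card : ℝ) / m * α := by
  have hm0 : (0:ℝ) < m := by exact_mod_cast Nat.lt_of_lt_of_le Nat.zero_lt_one hm
  have hc : 0 < α / m := div_pos hα hm0
  have hp : Measurable p := measurable_pi_lambda p hmeas
  have hint : ∀ j ∈ I0, Integrable (fun ω => Gfun R j (p ω)) μ := by
    intro j _
    refine (integrable_const (1:ℝ)).mono'
      (((measurable_Gfun R hRmeas hRm j).comp hp).aestronglyMeasurable)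
      (ae_of_all _ (fun ω => ?_))
    rw [Real.norm_eq_abs, abs_of_nonneg (Gfun_nonneg R j (p ω))]
    exact Gfun_le_one R j (p ω)
  -- the key per-coordinate bound
  have key : ∀ i ∈ I0, ∫ ω, Gfun R i (p ω) ∂μ ≤ α / m := by
    intro i hi
    set X : Ω → ℝ := fun ω => p ω i with hX
    set Z : Ω → ({k : Fin m // k ≠ i} → ℝ) := fun ω k => p ω k.1 with hZ
    have hXm : Measurable X := hmeas i
    have hZm : Measurable Z := measurable_pi_lambda _ (fun k => hmeas k.1)
    have hindep : IndepFun Z X μ := (indep_coord μ I0 p hmeas hBI2 hBI3 hi).symm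
    have hmap : μ.map (fun ω => (Z ω, X ω)) = (μ.map Z).prod (μ.map X) :=
      (indepFun_iff_map_prod_eq_prod_map_map hZm.aemeasurable hXm.aemeasurable).1 hindep
    haveI : IsProbabilityMeasure (μ.map X) := Measure.isProbabilityMeasure_map hXm.aemeasurable
    haveI : IsProbabilityMeasure (μ.map Z) := Measure.isProbabilityMeasure_map hZm.aemeasurable
    set F : (({k : Fin m // k ≠ i} → ℝ) × ℝ) → ℝ :=
      fun x => Gfun R i (recomb i x.1 x.2) with hF
    have hFmeas : Measurable F := (measurable_Gfun R hRmeas hRm i).comp (measurable_recomb i)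
    have hFbd : ∀ x, ‖F x‖ ≤ 1 := by
      intro x
      rw [Real.norm_eq_abs, abs_of_nonneg (Gfun_nonneg R i _)]
      exact Gfun_le_one R i _
    have hFint : Integrable F ((μ.map Z).prod (μ.map X)) :=
      (integrable_const (1:ℝ)).mono' hFmeas.aestronglyMeasurable (ae_of_all _ hFbd)
    have hν : ∀ x : ℝ, 0 ≤ x → x ≤ 1 → (μ.map X) (Set.Iic x) ≤ ENNReal.ofReal x := by
      intro x h0 h1
      rw [Measure.map_apply hXm measurableSet_Iic]
      exact hstoch i hi x ⟨h0, h1⟩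
    have hae : ∀ᵐ u ∂(μ.map X), u ∈ Set.Icc (0:ℝ) 1 :=
      (ae_map_iff hXm.aemeasurable measurableSet_Icc).2 (ae_of_all _ (fun ω => hrange ω i))
    have hinner : ∀ w, ∫ u, F (w, u) ∂(μ.map X) ≤ α / m := by
      intro w
      refine inner_bound hc hν hae (fun u => R (recomb i w u))
        {u : ℝ | 1 ≤ R (recomb i w u) ∧
          recomb i w u i ≤ orderStat (recomb i w u) (R (recomb i w u))}
        (fun u => F (w, u)) ?_ ?_ ?_
      · intro u
        show Gfun R i (recomb i w u) = _
        simp only [Set.mem_setOf_eq]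
        by_cases h : 1 ≤ R (recomb i w u) ∧
            recomb i w u i ≤ orderStat (recomb i w u) (R (recomb i w u))
        · rw [if_pos h]
          exact Set.indicator_of_mem (show recomb i w u ∈ rejSet R i from h) (Dfun R)
        · rw [if_neg h]
          exact Set.indicator_of_notMem (show recomb i w u ∉ rejSet R i from h) (Dfun R)
      · intro u hu
        exact hu.1
      · intro u hu u' hu'
        have hqiu : recomb i w u i = u := recomb_same i w u
        have hqiu' : recomb i w u' i = u' := recomb_same i w u'
        have hu1 : 1 ≤ R (recomb i w u) := hu.1
        have huu : u ≤ orderStat (recomb i w u) (R (recomb i w u)) := by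
          have h2 := hu.2
          rwa [hqiu] at h2
        have hself : u ≤ (R (recomb i w u) : ℝ) * α / m := le_trans huu (hsc _ hu1)
        have hgoalr : (α / m) * (R (recomb i w u) : ℝ) = (R (recomb i w u) : ℝ) * α / m := by
          ring
        rcases le_total u' u with h | h
        · rw [hgoalr]
          exact le_trans h hself
        · have hu'1 : 1 ≤ R (recomb i w u') := hu'.1
          have huu' : u' ≤ orderStat (recomb i w u') (R (recomb i w u')) := by
            have h2 := hu'.2
            rwa [hqiu'] at h2
          have hself' : u' ≤ (R (recomb i w u') : ℝ) * α / m := le_trans huu' (hsc _ hu'1)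
          have hRR : R (recomb i w u') ≤ R (recomb i w u) := by
            refine hmono (recomb i w u) (recomb i w u') i ?_ ?_ ?_
            · intro k hk
              rw [recomb_other i w u hk, recomb_other i w u' hk]
            · rw [hqiu, hqiu']
              exact h
            · rw [hqiu]
              exact hself
          have hcast : ((R (recomb i w u') : ℕ) : ℝ) ≤ ((R (recomb i w u) : ℕ) : ℝ) := by
            exact_mod_cast hRR
          rw [hgoalr]
          calc u' ≤ (R (recomb i w u') : ℝ) * α / m := hself'
            _ ≤ (R (recomb i w u) : ℝ) * α / m := by
                have hmul := mul_le_mul_of_nonneg_right hcast hα.le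
                exact (div_le_div_iff_of_pos_right hm0).2 hmul
    calc ∫ ω, Gfun R i (p ω) ∂μ
        = ∫ ω, F (Z ω, X ω) ∂μ := by
          refine integral_congr_ae (ae_of_all _ (fun ω => ?_))
          exact (congrArg (Gfun R i) (recomb_self i (p ω))).symm
      _ = ∫ x, F x ∂(μ.map (fun ω => (Z ω, X ω))) :=
          (integral_map (hZm.prodMk hXm).aemeasurable hFmeas.aestronglyMeasurable).symm
      _ = ∫ x, F x ∂((μ.map Z).prod (μ.map X)) := by rw [hmap]
      _ = ∫ w, ∫ u, F (w, u) ∂(μ.map X) ∂(μ.map Z) := integral_prod F hFint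
      _ ≤ ∫ _, (α / m) ∂(μ.map Z) := by
          refine integral_mono_of_nonneg ?_ (integrable_const _) (ae_of_all _ hinner)
          refine ae_of_all _ (fun w => ?_)
          exact integral_nonneg (fun u => Gfun_nonneg R i _)
      _ = α / m := by simp
  -- assemble
  have e : FDR μ p I0 R (fun q j => 1 ≤ R q ∧ q j ≤ orderStat q (R q))
      = ∑ j ∈ I0, ∫ ω, Gfun R j (p ω) ∂μ := by
    rw [FDR, ← integral_finset_sum I0 hint]
    refine integral_congr_ae (ae_of_all _ (fun ω => ?_))
    simp only [Finset.card_filter, Nat.cast_sum, Finset.sum_div]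
    refine Finset.sum_congr rfl (fun j hj => ?_)
    by_cases h : 1 ≤ R (p ω) ∧ p ω j ≤ orderStat (p ω) (R (p ω))
    · rw [if_pos h, show Gfun R j (p ω) = Dfun R (p ω) from
        Set.indicator_of_mem (show p ω ∈ rejSet R j from h) (Dfun R)]
      rw [Dfun]
      simp [one_div]
    · rw [if_neg h, show Gfun R j (p ω) = 0 from
        Set.indicator_of_notMem (show p ω ∉ rejSet R j from h) (Dfun R)]
      simp
  rw [e]
  have hsum : ∑ j ∈ I0, ∫ ω, Gfun R j (p ω) ∂μ ≤ ∑ _j ∈ I0, (α / (m:ℝ)) :=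
    Finset.sum_le_sum key
  refine le_trans hsum ?_
  rw [Finset.sum_const, nsmul_eq_mul]
  have : (I0.card : ℝ) * (α / (m:ℝ)) = (I0.card : ℝ) / m * α := by ring
  exact le_of_eq this

end BH

/-- The Benjamini–Hochberg step-down test (with critical values
`b_i = iα/m`, or with the data-dependent values `a_i = b_{m·F̂_m(p_{i:m})}`)
controls the FDR at level `(m₀/m)·α` under the basic independence assumptions. -/
theorem bh_stepdown_fdr_control
    {Ω : Type*} [MeasurableSpace Ω] (μ : Measure Ω) [IsProbabilityMeasure μ]
    (m : ℕ) (hm : 1 ≤ m) (α : ℝ) (hα : α ∈ Set.Ioo (0:ℝ) 1)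
    (I0 : Finset (Fin m)) (p : Ω → Fin m → ℝ)
    (hmeas : ∀ i, Measurable (fun ω => p ω i))
    (hrange : ∀ ω i, p ω i ∈ Set.Icc (0:ℝ) 1)
    -- (BI)(2)
    (hBI2 : IndepFun (fun ω (i : {i // i ∈ I0}) => p ω i)
      (fun ω (i : {i // i ∉ I0}) => p ω i) μ)
    -- (BI)(3)
    (hBI3 : iIndepFun (fun (i : {i // i ∈ I0}) ω => p ω i.1) μ)
    (hstoch : ∀ i ∈ I0, ∀ x ∈ Set.Icc (0:ℝ) 1, μ {ω | p ω i ≤ x} ≤ ENNReal.ofReal x) :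
    sdFDR μ (bh m α) p I0 ≤ (I0.card : ℝ) / m * α ∧
    sdFDRdata μ (bh m α) p I0 ≤ (I0.card : ℝ) / m * α := by
  constructor
  · rw [sdFDR]
    refine BH.main_bound μ hm hα.1 I0 p hmeas hrange hBI2 hBI3 hstoch
      (sdR (bh m α)) (BH.measurable_sdR α) (fun q => BH.sdR_le _ q)
      (fun q h1 => BH.sdR_selfcons q h1) ?_
    intro q q' i0 hkk hle _
    refine BH.sdR_antitone (fun k => ?_)
    by_cases h : k = i0
    · rw [h]; exact hle
    · exact (hkk k h).le
  · rw [sdFDRdata]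
    refine BH.main_bound μ hm hα.1 I0 p hmeas hrange hBI2 hBI3 hstoch
      (sdRdata (bh m α)) (BH.measurable_sdRdata α) (fun q => BH.sdRdata_le _ q)
      (fun q h1 => BH.sdRdata_selfcons q h1) ?_
    intro q q' i0 hkk hle hself
    exact BH.sdRdata_antitone hm hα.1 i0 hkk hle hself
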